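/- ∫₀^{x₀} 6x · U((x₀−x)/x₀)/(1 + x⁴) dx < 0, where x₀ = (3/5)^{1/4} and U(τ) = (7τ² − 8τ + 2)τ². -/

import Mathlib

noncomputable def U (τ : ℝ) : ℝ := (7 * τ^2 - 8 * τ + 2) * τ^2

noncomputable def x₀ : ℝ := (3/5 : ℝ) ^ ((1:ℝ)/4)

lemma x0_pos : 0 < x₀ := Real.rpow_pos_of_pos (by norm_num) _

lemma x0_pow4 : x₀^4 = 3/5 := by
  rw [x₀, ← Real.rpow_natCast _ 4, ← Real.rpow_mul (by norm_num)]
  norm_num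

/-- the polynomial upper bound integrand -/
noncomputable def gfun (x : ℝ) : ℝ :=
  6 * x * U ((x₀ - x) / x₀) * (1 - x^4 + x^8 - x^12) + (x₀/4) * x^16

/-- rescaled polynomial -/
noncomputable def ppoly (s : ℝ) : ℝ :=
  6*s - 48*s^2 + 120*s^3 - 120*s^4 + (192/5)*s^5 + (144/5)*s^6 - 72*s^7 + 72*s^8
  - (576/25)*s^9 - (432/25)*s^10 + (216/5)*s^11 - (216/5)*s^12 + (1728/125)*s^13
  + (1296/125)*s^14 - (648/25)*s^15 + (64881/2500)*s^16 - (1134/125)*s^17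

noncomputable def Hfun (s : ℝ) : ℝ :=
  3*s^2 - 16*s^3 + 30*s^4 - 24*s^5 + (32/5)*s^6 + (144/35)*s^7 - 9*s^8 + 8*s^9
  - (288/125)*s^10 - (432/275)*s^11 + (18/5)*s^12 - (216/65)*s^13 + (864/875)*s^14
  + (432/625)*s^15 - (81/50)*s^16 + (64881/42500)*s^17 - (63/125)*s^18

lemma Hfun_deriv (s : ℝ) : HasDerivAt Hfun (ppoly s) s := by
  have h := ((((((((((((((((((hasDerivAt_pow 2 s).const_mul (3:ℝ)).add
    ((hasDerivAt_pow 3 s).const_mul (-16:ℝ))).add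
    ((hasDerivAt_pow 4 s).const_mul (30:ℝ))).add
    ((hasDerivAt_pow 5 s).const_mul (-24:ℝ))).add
    ((hasDerivAt_pow 6 s).const_mul (32/5:ℝ))).add
    ((hasDerivAt_pow 7 s).const_mul (144/35:ℝ))).add
    ((hasDerivAt_pow 8 s).const_mul (-9:ℝ))).add
    ((hasDerivAt_pow 9 s).const_mul (8:ℝ))).add
    ((hasDerivAt_pow 10 s).const_mul (-288/125:ℝ))).add
    ((hasDerivAt_pow 11 s).const_mul (-432/275:ℝ))).add
    ((hasDerivAt_pow 12 s).const_mul (18/5:ℝ))).add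
    ((hasDerivAt_pow 13 s).const_mul (-216/65:ℝ))).add
    ((hasDerivAt_pow 14 s).const_mul (864/875:ℝ))).add
    ((hasDerivAt_pow 15 s).const_mul (432/625:ℝ))).add
    ((hasDerivAt_pow 16 s).const_mul (-81/50:ℝ))).add
    ((hasDerivAt_pow 17 s).const_mul (64881/42500:ℝ))).add
    ((hasDerivAt_pow 18 s).const_mul (-63/125:ℝ)))
  convert h using 1 <;> first | rfl | (funext t; unfold Hfun; simp only [Pi.add_apply]; ring) | (unfold ppoly; push_cast; ring)

lemma ppoly_cont : Continuous ppoly := by unfold ppoly; fun_prop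

lemma ppoly_integral : (∫ s in (0:ℝ)..1, ppoly s) = -104653/42542500 := by
  rw [intervalIntegral.integral_eq_sub_of_hasDerivAt
    (fun s _ => Hfun_deriv s) (ppoly_cont.intervalIntegrable 0 1)]
  unfold Hfun; norm_num

lemma key_poly (s : ℝ) (h0 : 0 ≤ s) (h1 : s ≤ 1) :
    24 * s * ((7*(1-s)^2 - 8*(1-s) + 2) * (1-s)^2) ≤ 1 := by
  have t1 : (0:ℝ) ≤ 1112/1000 - s := by linarith
  nlinarith [mul_nonneg (mul_nonneg t1 (sq_nonneg (s - 8695/100000))) (sq_nonneg (s - 78559/100000)),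
    mul_nonneg t1 (sq_nonneg (s - 8695/100000)),
    mul_nonneg t1 (sq_nonneg (s - 78559/100000)), t1, h0,
    mul_nonneg h0 (sq_nonneg (s - 78559/100000)), mul_nonneg h0 (sq_nonneg (s - 8695/100000))]

lemma A_le (x : ℝ) (hx : x ∈ Set.Icc 0 x₀) : 6 * x * U ((x₀ - x) / x₀) ≤ x₀/4 := by
  obtain ⟨hx0, hx1⟩ := hx
  set s : ℝ := x / x₀ with hs
  have hxne : x₀ ≠ 0 := ne_of_gt x0_pos
  have hs0 : 0 ≤ s := div_nonneg hx0 x0_pos.le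
  have hs1 : s ≤ 1 := (div_le_one x0_pos).2 hx1
  have hxeq : x = x₀ * s := by field_simp [hs]; rw [mul_div_cancel₀ _ hxne]
  have hτ : (x₀ - x) / x₀ = 1 - s := by rw [hxeq]; field_simp
  rw [hτ, hxeq, U]
  have := key_poly s hs0 hs1
  nlinarith [mul_le_mul_of_nonneg_left this x0_pos.le, x0_pos]

lemma gfun_cont : Continuous gfun := by
  have hU : Continuous U := by unfold U; fun_prop
  unfold gfun
  have : Continuous fun x : ℝ => U ((x₀ - x) / x₀) := hU.comp (by fun_prop)
  fun_prop

lemma f_cont : Continuous fun x : ℝ => 6 * x * U ((x₀ - x) / x₀) / (1 + x^4) := by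
  have hU : Continuous U := by unfold U; fun_prop
  have h1 : Continuous fun x : ℝ => 6 * x * U ((x₀ - x) / x₀) :=
    (continuous_const.mul continuous_id).mul (hU.comp (by fun_prop))
  exact h1.div (by fun_prop) (fun x => by positivity)

lemma pointwise (x : ℝ) (hx : x ∈ Set.Icc 0 x₀) :
    6 * x * U ((x₀ - x) / x₀) / (1 + x^4) ≤ gfun x := by
  have hD : (0:ℝ) < 1 + x^4 := by positivity
  have hA := A_le x hx
  rw [div_le_iff₀ hD]
  unfold gfun
  nlinarith [mul_le_mul_of_nonneg_right hA (pow_nonneg hx.1 16),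
    pow_nonneg hx.1 4, pow_nonneg hx.1 16, pow_nonneg hx.1 20, x0_pos,
    mul_nonneg (mul_nonneg x0_pos.le (pow_nonneg hx.1 16)) (pow_nonneg hx.1 4)]

lemma gfun_scaled (s : ℝ) : gfun (x₀ * s) = x₀ * ppoly s := by
  have hxne : x₀ ≠ 0 := ne_of_gt x0_pos
  have e : x₀^4 = 3/5 := x0_pow4
  have h5 : x₀^5 = 3/5 * x₀ := by rw [show x₀^5 = x₀^4 * x₀ by ring, e]
  have h9 : x₀^9 = 9/25 * x₀ := by rw [show x₀^9 = (x₀^4)^2 * x₀ by ring, e]; norm_num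
  have h13 : x₀^13 = 27/125 * x₀ := by rw [show x₀^13 = (x₀^4)^3 * x₀ by ring, e]; norm_num
  have h17 : x₀^17 = 81/625 * x₀ := by rw [show x₀^17 = (x₀^4)^4 * x₀ by ring, e]; norm_num
  have hτ : (x₀ - x₀ * s) / x₀ = 1 - s := by field_simp
  unfold gfun ppoly
  rw [hτ, U]
  linear_combination (-6*s^5*((7*(1-s)^2 - 8*(1-s) + 2) * (1-s)^2)) * h5
    + (6*s^9*((7*(1-s)^2 - 8*(1-s) + 2) * (1-s)^2)) * h9
    + (-6*s^13*((7*(1-s)^2 - 8*(1-s) + 2) * (1-s)^2)) * h13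
    + (s^16/4) * h17

lemma gfun_integral : (∫ x in (0:ℝ)..x₀, gfun x) = x₀^2 * (-104653/42542500) := by
  have h := intervalIntegral.smul_integral_comp_mul_left gfun x₀ (a := 0) (b := 1)
  rw [mul_zero, mul_one] at h
  rw [← h]
  have : (∫ s in (0:ℝ)..1, gfun (x₀ * s)) = ∫ s in (0:ℝ)..1, x₀ * ppoly s := by
    apply intervalIntegral.integral_congr
    intro s _
    exact gfun_scaled s
  rw [this, intervalIntegral.integral_const_mul, ppoly_integral, smul_eq_mul]
  ring

theorem perturbation_integral_neg :
    (∫ x in (0:ℝ)..x₀, 6 * x * U ((x₀ - x) / x₀) / (1 + x^4)) < 0 := by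
  have hle : (∫ x in (0:ℝ)..x₀, 6 * x * U ((x₀ - x) / x₀) / (1 + x^4))
      ≤ ∫ x in (0:ℝ)..x₀, gfun x := by
    apply intervalIntegral.integral_mono_on x0_pos.le
      (f_cont.intervalIntegrable 0 x₀) (gfun_cont.intervalIntegrable 0 x₀)
    exact pointwise
  have hneg : (∫ x in (0:ℝ)..x₀, gfun x) < 0 := by
    rw [gfun_integral]
    have := x0_pos
    nlinarith
  linarith
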